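/- As n → ∞, (1/n) Σ_{i=1}^n ⌊n/i⌋ = ln n + 2γ − 1 + o(1); equivalently, the sequence (1/n) Σ_{i=1}^n ⌊n/i⌋ − ln n converges to 2γ − 1, where γ is the Euler–Mascheroni constant. -/

import Mathlib

open Finset

lemma rows_card (n k : ℕ) (hk : k ≤ n) :
    ((Icc 1 n ×ˢ Icc 1 n).filter (fun p => p.1 * p.2 ≤ n ∧ p.1 ≤ k)).card
      = ∑ i ∈ Icc 1 k, n / i := by
  rw [Finset.card_eq_sum_card_fiberwise (f := Prod.fst) (t := Icc 1 k)
    (fun p hp => by simp only [mem_coe, mem_filter, mem_product, mem_Icc] at hp ⊢; omega)]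
  refine Finset.sum_congr rfl fun i hi => ?_
  rw [mem_Icc] at hi
  have hi1 : 0 < i := hi.1
  have heq : ((Icc 1 n ×ˢ Icc 1 n).filter (fun p => p.1 * p.2 ≤ n ∧ p.1 ≤ k)).filter
      (fun p => p.1 = i) = {i} ×ˢ Icc 1 (n / i) := by
    ext ⟨a, b⟩
    simp only [mem_filter, mem_product, mem_Icc, mem_singleton]
    constructor
    · rintro ⟨⟨⟨-, hb⟩, hab, -⟩, rfl⟩
      exact ⟨rfl, hb.1, (Nat.le_div_iff_mul_le hi1).2 (by rwa [mul_comm])⟩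
    · rintro ⟨rfl, hb1, hb2⟩
      have hmul := (Nat.le_div_iff_mul_le hi1).1 hb2
      rw [mul_comm] at hmul
      have hbn : b ≤ n := le_trans (Nat.le_mul_of_pos_left b hi1) hmul
      exact ⟨⟨⟨⟨hi.1, hi.2.trans hk⟩, hb1, hbn⟩, hmul, hi.2⟩, rfl⟩
  rw [heq, Finset.card_product, Finset.card_singleton, one_mul, Nat.card_Icc,
    Nat.add_sub_cancel]

lemma hyperbola (n : ℕ) :
    ∑ i ∈ Icc 1 n, n / i + Nat.sqrt n * Nat.sqrt n
      = 2 * ∑ i ∈ Icc 1 (Nat.sqrt n), n / i := by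
  set m := Nat.sqrt n with hm
  have hmn : m ≤ n := Nat.sqrt_le_self n
  have hsq : m * m ≤ n := by simpa [pow_two] using Nat.sqrt_le' n
  have hsq' : n < (m + 1) * (m + 1) := by
    simpa [pow_two, Nat.succ_eq_add_one] using Nat.lt_succ_sqrt' n
  set T := (Icc 1 n ×ˢ Icc 1 n).filter (fun p => p.1 * p.2 ≤ n) with hT
  set A := T.filter (fun p => p.1 ≤ m) with hA
  set B := T.filter (fun p => p.2 ≤ m) with hB
  have hTcard : T.card = ∑ i ∈ Icc 1 n, n / i := by
    rw [← rows_card n n le_rfl]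
    congr 1
    rw [hT]
    refine Finset.filter_congr fun p hp => ?_
    simp only [mem_product, mem_Icc] at hp
    simp [hp.1.2]
  have hAcard : A.card = ∑ i ∈ Icc 1 m, n / i := by
    rw [hA, hT, Finset.filter_filter, rows_card n m hmn]
  have hBA : B = A.map ⟨Prod.swap, Prod.swap_injective⟩ := by
    ext ⟨a, b⟩
    simp only [hB, hA, hT, Finset.mem_map, mem_filter, mem_product, mem_Icc,
      Function.Embedding.coeFn_mk, Prod.exists]
    constructor
    · rintro ⟨⟨⟨ha, hb⟩, hab⟩, h2⟩
      exact ⟨b, a, ⟨⟨⟨hb, ha⟩, by rwa [mul_comm]⟩, h2⟩, rfl⟩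
    · rintro ⟨x, y, ⟨⟨⟨hx, hy⟩, hxy⟩, h1⟩, heq⟩
      rw [Prod.swap] at heq
      obtain ⟨rfl, rfl⟩ := Prod.mk.injEq .. ▸ Prod.ext_iff.1 heq
      exact ⟨⟨⟨hy, hx⟩, by rwa [mul_comm]⟩, h1⟩
  have hBcard : B.card = ∑ i ∈ Icc 1 m, n / i := by
    rw [hBA, Finset.card_map, hAcard]
  have hunion : A ∪ B = T := by
    rw [hA, hB, ← Finset.filter_or]
    apply Finset.filter_true_of_mem
    intro p hp
    by_contra h
    push_neg at h
    simp only [hT, mem_filter, mem_product, mem_Icc] at hp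
    have : (m + 1) * (m + 1) ≤ p.1 * p.2 := Nat.mul_le_mul h.1 h.2
    omega
  have hinter : A ∩ B = Icc 1 m ×ˢ Icc 1 m := by
    rw [hA, hB, ← Finset.filter_and]
    ext ⟨a, b⟩
    simp only [hT, mem_filter, mem_product, mem_Icc]
    constructor
    · rintro ⟨⟨⟨ha, hb⟩, -⟩, h1, h2⟩
      exact ⟨⟨ha.1, h1⟩, hb.1, h2⟩
    · rintro ⟨⟨ha1, ha2⟩, hb1, hb2⟩
      have : a * b ≤ n := le_trans (Nat.mul_le_mul ha2 hb2) hsq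
      exact ⟨⟨⟨⟨ha1, ha2.trans hmn⟩, hb1, hb2.trans hmn⟩, this⟩, ha2, hb2⟩
  have hcards := Finset.card_union_add_card_inter A B
  rw [hunion, hinter, hTcard, hAcard, hBcard, Finset.card_product, Nat.card_Icc,
    Nat.add_sub_cancel] at hcards
  omega

open Finset Filter Topology Real

lemma floor_nat_div (n i : ℕ) : (⌊(n:ℝ)/(i:ℝ)⌋ : ℝ) = ((n / i : ℕ) : ℝ) := by
  have h0 : (0:ℝ) ≤ (n:ℝ)/(i:ℝ) := by positivity
  have h1 : (⌊(n:ℝ)/(i:ℝ)⌋₊ : ℤ) = ⌊(n:ℝ)/(i:ℝ)⌋ := Int.natCast_floor_eq_floor h0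
  rw [← h1]
  push_cast
  rw [Nat.floor_div_natCast, Nat.floor_natCast]

lemma harm_sum (m : ℕ) : ∑ i ∈ Icc 1 m, (1:ℝ)/i = ((harmonic m : ℚ) : ℝ) := by
  rw [harmonic]
  push_cast
  rw [← Finset.Ico_add_one_right_eq_Icc, Finset.sum_Ico_eq_sum_range]
  simp [add_comm]

noncomputable def En (n : ℕ) : ℝ :=
  ∑ i ∈ Finset.Icc 1 (Nat.sqrt n), ((n:ℝ)/i - ((n/i : ℕ):ℝ))

lemma En_nonneg (n : ℕ) : 0 ≤ En n := by
  apply Finset.sum_nonneg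
  intro i _
  have := Nat.cast_div_le (m := n) (n := i) (α := ℝ)
  linarith

lemma En_le (n : ℕ) : En n ≤ (Nat.sqrt n : ℝ) := by
  have : En n ≤ (Icc 1 (Nat.sqrt n)).card • (1:ℝ) := by
    apply Finset.sum_le_card_nsmul
    intro i hi
    rw [mem_Icc] at hi
    have hi1 : 0 < i := hi.1
    have hii : (0:ℝ) < i := by exact_mod_cast hi1
    have hdm := Nat.div_add_mod n i
    have hml := Nat.mod_lt n hi1
    have : n < (n / i + 1) * i := by
      calc n = i * (n / i) + n % i := hdm.symm
        _ < i * (n / i) + i := by omega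
        _ = (n / i + 1) * i := by ring
    have hlt : (n:ℝ) < ((n/i : ℕ) + 1) * i := by exact_mod_cast this
    have := (div_lt_iff₀ hii).2 hlt
    linarith
  simpa [Nat.card_Icc] using this
open Finset Filter Topology Real

lemma key_identity (n : ℕ) (hn : 1 ≤ n) :
    (1 / (n : ℝ)) * (∑ i ∈ Finset.Icc 1 n, (⌊(n : ℝ) / i⌋ : ℝ)) - Real.log n
      = 2 * (((harmonic (Nat.sqrt n) : ℚ) : ℝ) - Real.log (Nat.sqrt n)) - 1
        + ((2 * Real.log (Nat.sqrt n) - Real.log n)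
           + (1 - ((Nat.sqrt n : ℝ) * (Nat.sqrt n : ℝ)) / n) - 2 * En n / n) := by
  set m := Nat.sqrt n with hm
  have hn0 : (0:ℝ) < n := by exact_mod_cast hn
  have hcast : ∑ i ∈ Icc 1 n, (⌊(n : ℝ) / i⌋ : ℝ)
      = 2 * (∑ i ∈ Icc 1 m, ((n / i : ℕ) : ℝ)) - (m : ℝ) * m := by
    have h1 : ∑ i ∈ Icc 1 n, (⌊(n : ℝ) / i⌋ : ℝ) = ∑ i ∈ Icc 1 n, ((n / i : ℕ) : ℝ) :=
      Finset.sum_congr rfl fun i _ => floor_nat_div n i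
    have h2 := hyperbola n
    have h3 : ((∑ i ∈ Icc 1 n, n / i : ℕ) : ℝ) + (m:ℝ) * m
        = 2 * ((∑ i ∈ Icc 1 m, n / i : ℕ) : ℝ) := by exact_mod_cast congrArg (Nat.cast : ℕ → ℝ) h2
    push_cast at h3
    rw [h1]
    push_cast
    linarith
  have hE : ∑ i ∈ Icc 1 m, ((n / i : ℕ) : ℝ)
      = (n : ℝ) * ((harmonic m : ℚ) : ℝ) - En n := by
    rw [En, Finset.sum_sub_distrib, ← harm_sum m, Finset.mul_sum]
    have : ∑ i ∈ Icc 1 m, (n:ℝ)/i = ∑ i ∈ Icc 1 m, (n:ℝ) * (1/i) := by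
      refine Finset.sum_congr rfl fun i _ => ?_; ring
    rw [this]
    ring
  rw [hcast, hE]
  field_simp
  ring
open Finset Filter Topology Real

lemma tendsto_nat_sqrt_atTop : Tendsto Nat.sqrt atTop atTop :=
  tendsto_atTop_atTop.2 fun b => ⟨b * b, fun a ha => Nat.le_sqrt.2 ha⟩



open Filter Topology

/-- `(1/n) Σ_{i=1}^n ⌊n/i⌋ − ln n → 2γ − 1` as `n → ∞`, with `γ` the
Euler–Mascheroni constant. -/
theorem tendsto_average_floor_n_div_i_sub_log :
    Tendsto
      (fun n : ℕ =>
        (1 / (n : ℝ)) * (∑ i ∈ Finset.Icc 1 n, (⌊(n : ℝ) / i⌋ : ℝ)) - Real.log n)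
      atTop (𝓝 (2 * Real.eulerMascheroniConstant - 1)) := by
  have t1 := tendsto_nat_sqrt_atTop
  have t2 : Tendsto (fun n : ℕ => ((harmonic (Nat.sqrt n) : ℚ) : ℝ) - Real.log (Nat.sqrt n))
      atTop (𝓝 Real.eulerMascheroniConstant) := Real.tendsto_harmonic_sub_log.comp t1
  have t3 : Tendsto (fun n : ℕ => 1 / ((Nat.sqrt n : ℕ) : ℝ)) atTop (𝓝 0) :=
    tendsto_one_div_atTop_nhds_zero_nat.comp t1
  have hev : ∀ᶠ n : ℕ in atTop, 1 ≤ n := eventually_ge_atTop 1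
  have t3' : Tendsto (fun n : ℕ => 2 * (1 / ((Nat.sqrt n : ℕ) : ℝ))) atTop (𝓝 0) := by
    have := t3.const_mul (2:ℝ)
    rwa [mul_zero] at this
  have hfacts : ∀ n : ℕ, 1 ≤ n →
      (0 ≤ Real.log n - 2 * Real.log (Nat.sqrt n) ∧
        Real.log n - 2 * Real.log (Nat.sqrt n) ≤ 2 * (1 / (Nat.sqrt n : ℝ))) ∧
      (0 ≤ 1 - ((Nat.sqrt n : ℝ) * (Nat.sqrt n : ℝ)) / n ∧
        1 - ((Nat.sqrt n : ℝ) * (Nat.sqrt n : ℝ)) / n ≤ 2 * (1 / (Nat.sqrt n : ℝ))) ∧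
      (0 ≤ En n / n ∧ En n / n ≤ 1 / (Nat.sqrt n : ℝ)) := by
    intro n hn
    set m := Nat.sqrt n with hm
    have hm1 : 1 ≤ m := Nat.sqrt_pos.2 hn
    have hn0 : (0:ℝ) < n := by exact_mod_cast hn
    have hm0 : (0:ℝ) < m := by exact_mod_cast hm1
    have hsqN : m * m ≤ n := by simpa [pow_two] using Nat.sqrt_le' n
    have hsq : (m:ℝ) * m ≤ n := by exact_mod_cast hsqN
    have hsq'N : n ≤ m * m + 2 * m := by
      have := Nat.lt_succ_sqrt' n
      simp only [pow_two, Nat.succ_eq_add_one, ← hm] at this ⊢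
      nlinarith
    have hsq' : (n:ℝ) ≤ (m:ℝ) * m + 2 * m := by exact_mod_cast hsq'N
    have hlog2 : 2 * Real.log m = Real.log ((m:ℝ) * m) := by
      rw [Real.log_mul hm0.ne' hm0.ne']; ring
    refine ⟨⟨?_, ?_⟩, ⟨?_, ?_⟩, ?_, ?_⟩
    · rw [sub_nonneg, hlog2]
      exact Real.log_le_log (by positivity) hsq
    · rw [hlog2]
      have h1 : Real.log n - Real.log ((m:ℝ)*m) = Real.log ((n:ℝ)/((m:ℝ)*m)) :=
        (Real.log_div hn0.ne' (by positivity)).symm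
      have h2 : Real.log ((n:ℝ)/((m:ℝ)*m)) ≤ (n:ℝ)/((m:ℝ)*m) - 1 :=
        Real.log_le_sub_one_of_pos (by positivity)
      have h3 : (n:ℝ)/((m:ℝ)*m) ≤ 2 * (1/(m:ℝ)) + 1 := by
        rw [div_le_iff₀ (by positivity)]
        have : (2 * (1/(m:ℝ)) + 1) * ((m:ℝ)*m) = 2*m + m*m := by field_simp
        linarith
      linarith
    · rw [sub_nonneg]
      exact (div_le_one hn0).2 hsq
    · have h1 : 1 - (m:ℝ)*m/n = ((n:ℝ) - m*m)/n := by field_simp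
      have h2 : ((n:ℝ) - m*m)/n ≤ (2*m)/((m:ℝ)*m) := by
        gcongr
        · linarith
      have h3 : (2*(m:ℝ))/((m:ℝ)*m) = 2 * (1/(m:ℝ)) := by field_simp
      linarith
    · exact div_nonneg (En_nonneg n) hn0.le
    · have h2 : En n / n ≤ (m:ℝ)/((m:ℝ)*m) := by
        gcongr
        · exact (En_le n)
      have h3 : (m:ℝ)/((m:ℝ)*m) = 1/(m:ℝ) := by field_simp
      linarith
  have tA : Tendsto (fun n : ℕ => Real.log n - 2 * Real.log (Nat.sqrt n)) atTop (𝓝 0) := by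
    refine tendsto_of_tendsto_of_tendsto_of_le_of_le' tendsto_const_nhds
      t3' ?_ ?_
    · exact hev.mono fun n hn => ((hfacts n hn).1).1
    · exact hev.mono fun n hn => ((hfacts n hn).1).2
  have tB : Tendsto (fun n : ℕ => 1 - ((Nat.sqrt n : ℝ) * (Nat.sqrt n : ℝ)) / n) atTop (𝓝 0) := by
    refine tendsto_of_tendsto_of_tendsto_of_le_of_le' tendsto_const_nhds
      t3' ?_ ?_
    · exact hev.mono fun n hn => ((hfacts n hn).2.1).1
    · exact hev.mono fun n hn => ((hfacts n hn).2.1).2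
  have tC : Tendsto (fun n : ℕ => En n / n) atTop (𝓝 0) := by
    refine tendsto_of_tendsto_of_tendsto_of_le_of_le' tendsto_const_nhds t3 ?_ ?_
    · exact hev.mono fun n hn => ((hfacts n hn).2.2).1
    · exact hev.mono fun n hn => ((hfacts n hn).2.2).2
  have tR : Tendsto (fun n : ℕ =>
      (2 * Real.log (Nat.sqrt n) - Real.log n)
        + (1 - ((Nat.sqrt n : ℝ) * (Nat.sqrt n : ℝ)) / n) - 2 * En n / n)
      atTop (𝓝 0) := by
    have := ((tA.neg).add tB).sub (tC.const_mul 2)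
    simp only [neg_zero, add_zero, zero_add, sub_zero, zero_sub, neg_neg, mul_zero] at this
    refine this.congr fun n => by ring
  have final := ((t2.const_mul 2).sub_const 1).add tR
  rw [add_zero] at final
  exact final.congr' (hev.mono fun n hn => (key_identity n hn).symm)
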